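/- Let A be a commutative local ring and n ≥ 1. Let D and D′ be diagonal n × n matrices over A whose diagonal entries are units (so D, D′ ∈ GL_n(A)). Then D and D′ are conjugate in GL_n(A) (i.e. there exists P ∈ GL_n(A) with P D P^{−1} = D′) if and only if the diagonal entries of D′ are a permutation of the diagonal entries of D, i.e. there exists a permutation σ of {1, …, n} such that D′_{ii} = D_{σ(i)σ(i)} for all i. -/

import Mathlib

lemma isUnit_sum_exists {A : Type} [CommRing A] [IsLocalRing A] {ι : Type*} (s : Finset ι)
    (f : ι → A) (h : IsUnit (∑ i ∈ s, f i)) : ∃ i ∈ s, IsUnit (f i) := by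
  by_contra hc
  push_neg at hc
  have : (∑ i ∈ s, f i) ∈ IsLocalRing.maximalIdeal A :=
    Ideal.sum_mem _ fun i hi => (IsLocalRing.mem_maximalIdeal _).2 (hc i hi)
  exact (IsLocalRing.mem_maximalIdeal _).1 this h

/-- Over a commutative local ring `A`, two invertible diagonal matrices are conjugate
in `GL_n(A)` iff their diagonal entries agree up to a permutation. -/
theorem stmt_7 (A : Type) [CommRing A] [IsLocalRing A]
    (n : ℕ) (hn : 1 ≤ n) (d d' : Fin n → Aˣ) :
    (∃ P : (Matrix (Fin n) (Fin n) A)ˣ,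
        (P : Matrix (Fin n) (Fin n) A) * Matrix.diagonal (fun i => (d i : A)) *
          ((P⁻¹ : (Matrix (Fin n) (Fin n) A)ˣ) : Matrix (Fin n) (Fin n) A) =
        Matrix.diagonal (fun i => (d' i : A))) ↔
    ∃ σ : Equiv.Perm (Fin n), ∀ i, (d' i : A) = (d (σ i) : A) := by
  constructor
  · rintro ⟨P, hP⟩
    -- P * D = D' * P
    have key : Matrix.diagonal (fun i => (d' i : A)) * (P : Matrix (Fin n) (Fin n) A)
        = (P : Matrix (Fin n) (Fin n) A) * Matrix.diagonal (fun i => (d i : A)) := by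
      calc Matrix.diagonal (fun i => (d' i : A)) * (P : Matrix (Fin n) (Fin n) A)
          = (P : Matrix (Fin n) (Fin n) A) * Matrix.diagonal (fun i => (d i : A)) *
              ((P⁻¹ : (Matrix (Fin n) (Fin n) A)ˣ) : Matrix (Fin n) (Fin n) A) *
              (P : Matrix (Fin n) (Fin n) A) := by rw [hP]
        _ = (P : Matrix (Fin n) (Fin n) A) * Matrix.diagonal (fun i => (d i : A)) *
              (((P⁻¹ : (Matrix (Fin n) (Fin n) A)ˣ) : Matrix (Fin n) (Fin n) A) *
              (P : Matrix (Fin n) (Fin n) A)) := by rw [Matrix.mul_assoc]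
        _ = (P : Matrix (Fin n) (Fin n) A) * Matrix.diagonal (fun i => (d i : A)) := by
              rw [Units.inv_mul, Matrix.mul_one]
    have entry : ∀ i j, (d' i : A) * (P : Matrix (Fin n) (Fin n) A) i j
        = (P : Matrix (Fin n) (Fin n) A) i j * (d j : A) := by
      intro i j
      have := congrFun (congrFun key i) j
      simpa [Matrix.diagonal_mul, Matrix.mul_diagonal] using this
    -- det P is a unit, so some permutation term is a unit
    have hdet : IsUnit (P : Matrix (Fin n) (Fin n) A).det :=
      (Matrix.isUnit_iff_isUnit_det _).1 P.isUnit
    rw [Matrix.det_apply] at hdet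
    obtain ⟨σ, -, hσ⟩ := isUnit_sum_exists Finset.univ _ hdet
    have hprod : IsUnit (∏ i, (P : Matrix (Fin n) (Fin n) A) (σ i) i) := by
      rcases Int.units_eq_one_or (Equiv.Perm.sign σ) with h | h <;>
        simp only [h] at hσ <;> simpa using hσ
    have hentry : ∀ i, IsUnit ((P : Matrix (Fin n) (Fin n) A) (σ i) i) := fun i =>
      isUnit_of_dvd_unit (Finset.dvd_prod_of_mem (fun j => (P : Matrix (Fin n) (Fin n) A) (σ j) j) (Finset.mem_univ i)) hprod
    refine ⟨σ⁻¹, fun i => ?_⟩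
    have h1 := entry (σ (σ⁻¹ i)) (σ⁻¹ i)
    obtain ⟨u, hu⟩ := hentry (σ⁻¹ i)
    rw [← hu] at h1
    rw [mul_comm ((d' (σ (σ⁻¹ i)) : A)) (u : A)] at h1
    have h2 : (d' (σ (σ⁻¹ i)) : A) = (d (σ⁻¹ i) : A) := u.mul_right_inj.mp h1
    simpa using h2
  · rintro ⟨σ, hσ⟩
    refine ⟨⟨σ.permMatrix A, σ⁻¹.permMatrix A, ?_, ?_⟩, ?_⟩
    · rw [← PEquiv.toMatrix_trans, ← Equiv.toPEquiv_trans]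
      rw [show σ.trans σ⁻¹ = Equiv.refl (Fin n) from Equiv.self_trans_symm σ,
        Equiv.toPEquiv_refl, PEquiv.toMatrix_refl]
    · rw [← PEquiv.toMatrix_trans, ← Equiv.toPEquiv_trans]
      rw [show (σ⁻¹ : Equiv.Perm (Fin n)).trans σ = Equiv.refl (Fin n) from
        Equiv.symm_trans_self σ, Equiv.toPEquiv_refl, PEquiv.toMatrix_refl]
    · show σ.permMatrix A * _ * σ⁻¹.permMatrix A = _
      rw [PEquiv.toMatrix_toPEquiv_mul, PEquiv.mul_toMatrix_toPEquiv,
        Matrix.submatrix_submatrix]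
      have : (Matrix.diagonal fun i => (d i : A)).submatrix (σ ∘ id) (id ∘ (σ⁻¹).symm)
          = Matrix.diagonal fun i => (d (σ i) : A) := by
        have h2 : (id ∘ (σ⁻¹ : Equiv.Perm (Fin n)).symm : Fin n → Fin n) = ⇑σ :=
          funext fun x => by simp [Equiv.Perm.inv_def]
        rw [h2]
        have h3 : ((σ : Equiv.Perm (Fin n)) ∘ id : Fin n → Fin n) = ⇑σ := by ext x; simp
        rw [h3, Matrix.submatrix_diagonal _ _ σ.injective]
        rfl
      rw [this, show (fun i => (d (σ i) : A)) = fun i => (d' i : A) from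
        funext fun i => (hσ i).symm]
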